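/- If x(t)² + y(t)² > 0 for all t and (x, y, z) solves the Hopf system, then the function t ↦ x(t)² + y(t)² is strictly increasing on any interval where z(t) > 0 and strictly decreasing on any interval where z(t) < 0. -/

import Mathlib

open Real Set

/-- Along solutions of the Hopf system with x²+y² > 0 everywhere,
x²+y² is strictly increasing on any interval where z > 0 and strictly
decreasing on any interval where z < 0. -/
theorem hopf_cylindrical_radius_monotone
    (x y z : ℝ → ℝ)
    (hx : ∀ t, HasDerivAt x
      (8 * (4 * z t * x t - y t * (x t ^ 2 + y t ^ 2 + z t ^ 2) + 4 * y t) /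
        (x t ^ 2 + y t ^ 2 + z t ^ 2 + 4) ^ 2) t)
    (hy : ∀ t, HasDerivAt y
      (8 * (4 * z t * y t + x t * (x t ^ 2 + y t ^ 2 + z t ^ 2) - 4 * x t) /
        (x t ^ 2 + y t ^ 2 + z t ^ 2 + 4) ^ 2) t)
    (hz : ∀ t, HasDerivAt z
      ((24 * x t ^ 2 + 24 * y t ^ 2 - 8 * z t ^ 2 -
          (x t ^ 2 + y t ^ 2 + z t ^ 2) ^ 2 - 16) /
        (x t ^ 2 + y t ^ 2 + z t ^ 2 + 4) ^ 2) t)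
    (hpos : ∀ t, 0 < x t ^ 2 + y t ^ 2)
    (s : Set ℝ) (hs : s.OrdConnected) :
    ((∀ t ∈ s, 0 < z t) → StrictMonoOn (fun t => x t ^ 2 + y t ^ 2) s) ∧
    ((∀ t ∈ s, z t < 0) → StrictAntiOn (fun t => x t ^ 2 + y t ^ 2) s) := by

  have hden : ∀ t : ℝ, (x t ^ 2 + y t ^ 2 + z t ^ 2 + 4) ≠ 0 := by
    intro t
    nlinarith [sq_nonneg (x t), sq_nonneg (y t), sq_nonneg (z t)]
  have hf : ∀ t, HasDerivAt (fun t => x t ^ 2 + y t ^ 2)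
      (64 * z t * (x t ^ 2 + y t ^ 2) / (x t ^ 2 + y t ^ 2 + z t ^ 2 + 4) ^ 2) t := by
    intro t
    have h1 := ((hx t).fun_pow 2).fun_add ((hy t).fun_pow 2)
    refine h1.congr_deriv ?_
    have h4 := hden t
    push_cast
    ring
  have hconv : Convex ℝ s := hs.convex
  have hcont : ContinuousOn (fun t => x t ^ 2 + y t ^ 2) s :=
    fun t _ => ((hf t).continuousAt).continuousWithinAt
  have hderiv : ∀ t, deriv (fun t => x t ^ 2 + y t ^ 2) t =
      64 * z t * (x t ^ 2 + y t ^ 2) / (x t ^ 2 + y t ^ 2 + z t ^ 2 + 4) ^ 2 :=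
    fun t => (hf t).deriv
  constructor
  · intro hzpos
    apply strictMonoOn_of_deriv_pos hconv hcont
    intro t ht
    rw [hderiv]
    have h1 := hzpos t (interior_subset ht)
    have h2 := hpos t
    have h3 := (hden t)
    positivity
  · intro hzneg
    apply strictAntiOn_of_deriv_neg hconv hcont
    intro t ht
    rw [hderiv]
    have h1 := hzneg t (interior_subset ht)
    have h2 := hpos t
    have h3 : (0:ℝ) < (x t ^ 2 + y t ^ 2 + z t ^ 2 + 4) ^ 2 := by positivity
    apply div_neg_of_neg_of_pos _ h3
    nlinarith
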